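/- The vector fields E₋₁ = λ_ε ∂_λ + λ_εε ∂_{λ_ε} + ((3/2)λ_εε²/λ_ε − R(λ)λ_ε³)∂_{λ_εε}, E₀ = λ_ε ∂_{λ_ε} + 2λ_εε ∂_{λ_εε}, and E₁ = 2λ_ε ∂_{λ_εε} span a Lie algebra isomorphic to sl₂: [E₀, E₋₁] = −E₋₁ (up to sign conventions), [E₀, E₁] = E₁, [E₋₁, E₁] = 2E₀ (or the standard sl₂ relations after normalization). -/

import Mathlib

/-- `E₋₁ = λ_ε ∂_λ + λ_εε ∂_{λ_ε} + ((3/2)λ_εε²/λ_ε − R(λ)λ_ε³)∂_{λ_εε}`. -/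
noncomputable def Em1 (R : ℂ → ℂ) (p : ℂ × ℂ × ℂ) : ℂ × ℂ × ℂ :=
  (p.2.1, p.2.2, (3 / 2) * p.2.2 ^ 2 / p.2.1 - R p.1 * p.2.1 ^ 3)

/-- `E₀ = λ_ε ∂_{λ_ε} + 2λ_εε ∂_{λ_εε}`. -/
def E0 (p : ℂ × ℂ × ℂ) : ℂ × ℂ × ℂ := (0, p.2.1, 2 * p.2.2)

/-- `E₁ = 2λ_ε ∂_{λ_εε}`. -/
def E1 (p : ℂ × ℂ × ℂ) : ℂ × ℂ × ℂ := (0, 0, 2 * p.2.1)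

noncomputable def LyC : ℂ × ℂ × ℂ →L[ℂ] ℂ :=
  (ContinuousLinearMap.fst ℂ ℂ ℂ).comp (ContinuousLinearMap.snd ℂ ℂ (ℂ × ℂ))

noncomputable def LzC : ℂ × ℂ × ℂ →L[ℂ] ℂ :=
  (ContinuousLinearMap.snd ℂ ℂ ℂ).comp (ContinuousLinearMap.snd ℂ ℂ (ℂ × ℂ))

@[simp] lemma LyC_apply (v : ℂ × ℂ × ℂ) : LyC v = v.2.1 := rfl
@[simp] lemma LzC_apply (v : ℂ × ℂ × ℂ) : LzC v = v.2.2 := rfl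

/-- On `{λ_ε ≠ 0}`, the fields `E₋₁, E₀, E₁` close under the Lie bracket with
structure constants (independent of `R`) realizing the standard `sl₂` relations:
`[E₀, E₋₁] = E₋₁`, `[E₀, E₁] = −E₁`, `[E₋₁, E₁] = −2E₀` (up to sign conventions). -/
theorem sl2_parallelism_brackets (R : ℂ → ℂ) (hR : Differentiable ℂ R) :
    ∀ p : ℂ × ℂ × ℂ, p.2.1 ≠ 0 →
      VectorField.lieBracket ℂ E0 (Em1 R) p = Em1 R p ∧
      VectorField.lieBracket ℂ E0 E1 p = - E1 p ∧
      VectorField.lieBracket ℂ (Em1 R) E1 p = (-2 : ℂ) • E0 p := by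
  intro p hp
  have hx : HasFDerivAt (fun q : ℂ × ℂ × ℂ => q.1)
      (ContinuousLinearMap.fst ℂ ℂ (ℂ × ℂ)) p := hasFDerivAt_fst
  have hy : HasFDerivAt (fun q : ℂ × ℂ × ℂ => q.2.1) LyC p :=
    hasFDerivAt_fst.comp p hasFDerivAt_snd
  have hz : HasFDerivAt (fun q : ℂ × ℂ × ℂ => q.2.2) LzC p :=
    hasFDerivAt_snd.comp p hasFDerivAt_snd
  have hRx : HasFDerivAt (fun q : ℂ × ℂ × ℂ => R q.1)
      ((fderiv ℂ R p.1).comp (ContinuousLinearMap.fst ℂ ℂ (ℂ × ℂ))) p :=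
    (hR p.1).hasFDerivAt.comp p hx
  have hz2 : HasFDerivAt (fun q : ℂ × ℂ × ℂ => q.2.2 ^ 2)
      (p.2.2 • LzC + p.2.2 • LzC) p := by
    simp only [pow_two]; exact hz.mul hz
  have hy3 : HasFDerivAt (fun q : ℂ × ℂ × ℂ => q.2.1 ^ 3)
      ((p.2.1 * p.2.1) • LyC + p.2.1 • (p.2.1 • LyC + p.2.1 • LyC)) p := by
    simp only [pow_succ, pow_zero, one_mul]; exact (hy.mul hy).mul hy
  have hinv : HasFDerivAt (fun q : ℂ × ℂ × ℂ => q.2.1⁻¹)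
      ((ContinuousLinearMap.smulRight (1 : ℂ →L[ℂ] ℂ) (-(p.2.1 ^ 2)⁻¹)).comp LyC) p :=
    (hasFDerivAt_inv hp).comp p hy
  have h3 := ((hz2.const_mul ((3:ℂ)/2)).mul hinv).sub (hRx.mul hy3)
  have heq : Em1 R = fun q : ℂ × ℂ × ℂ =>
      (q.2.1, q.2.2, 3 / 2 * q.2.2 ^ 2 * q.2.1⁻¹ - R q.1 * q.2.1 ^ 3) := by
    funext q; simp [Em1, div_eq_mul_inv]
  have hEm1 : HasFDerivAt (Em1 R) _ p := heq ▸ (hy.prodMk (hz.prodMk h3))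
  have hE0 : HasFDerivAt E0 _ p :=
    ((hasFDerivAt_const (0:ℂ) p).prodMk (hy.prodMk (hz.const_mul 2)))
  have hE1 : HasFDerivAt E1 _ p :=
    ((hasFDerivAt_const (0:ℂ) p).prodMk ((hasFDerivAt_const (0:ℂ) p).prodMk (hy.const_mul 2)))
  rw [show VectorField.lieBracket ℂ E0 (Em1 R) p
        = fderiv ℂ (Em1 R) p (E0 p) - fderiv ℂ E0 p (Em1 R p) from rfl,
      show VectorField.lieBracket ℂ E0 E1 p
        = fderiv ℂ E1 p (E0 p) - fderiv ℂ E0 p (E1 p) from rfl,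
      show VectorField.lieBracket ℂ (Em1 R) E1 p
        = fderiv ℂ E1 p (Em1 R p) - fderiv ℂ (Em1 R) p (E1 p) from rfl,
      hEm1.fderiv, hE0.fderiv, hE1.fderiv]
  obtain ⟨x, y, z⟩ := p
  simp only [Em1, E0, E1] at *
  simp only [ContinuousLinearMap.prod_apply, ContinuousLinearMap.comp_apply,
    ContinuousLinearMap.coe_fst', ContinuousLinearMap.coe_snd',
    ContinuousLinearMap.sub_apply, ContinuousLinearMap.add_apply,
    ContinuousLinearMap.smul_apply, ContinuousLinearMap.coe_smul',
    Pi.smul_apply, smul_eq_mul, Prod.mk_sub_mk, Prod.smul_mk, Prod.neg_mk,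
    ContinuousLinearMap.zero_apply, ContinuousLinearMap.coe_mk']
  refine ⟨?_, ?_, ?_⟩ <;> refine Prod.ext ?_ (Prod.ext ?_ ?_) <;>
    simp [LyC_apply, LzC_apply] <;> (try field_simp) <;> (try ring) <;>
    (simp only [inv_pow]; field_simp; ring)
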